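/- arXiv:2001.10234 — 7 statements merged into one kernel-verified Lean document; each statement's English description precedes it below -/
import Mathlib

section
/- (Theorem 1) Consider problem P1 with K users, and suppose h_k · P_th > P_0 for every k. Let (P_s, τ_0, (τ_k), (P_k), (f_k)) be any feasible point of P1, i.e.: 0 ≤ P_s ≤ P_th; 0 ≤ τ_0 ≤ T; 0 ≤ τ_k ≤ T, P_k ≥ 0, f_k ≥ 0 for all k; τ_0 + Σ_{k=1}^K τ_k ≤ T; R_k := T·f_k/C + (B·τ_k/v_k)·log₂(1 + g_k·P_k/σ²) ≥ R_{k,min} for all k; and E_k := τ_0·P_{r,k} + ζ·τ_k·(P_k + P_{c,k}) + T·γ_c·f_k³ ≤ τ_0·P_{E,k}(P_s) for all k. Then there exists τ_0′ with 0 ≤ τ_0′ ≤ τ_0 such that (P_th, τ_0′, (τ_k), (P_k), (f_k)) is also feasible for P1 and, for every k, the energy E_k′ := τ_0′·P_{r,k} + ζ·τ_k·(P_k + P_{c,k}) + T·γ_c·f_k³ satisfies E_k′ ≤ E_k while the computed bits R_k are unchanged. Consequently the maximum of the max-min computation efficiency min_k R_k/E_k over the feasible set of P1 is achieved with P_s =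 P_th. -/
open Finset in
/-- Theorem 1: in the TDMA wireless-powered MEC network under partial offloading,
any feasible point of P1 can be modified, by setting the station power to `P_th`
and suitably shrinking the energy-harvesting time, into another feasible point
with unchanged computed bits and no larger consumed energy for every user;
consequently the max-min computation efficiency over the feasible set of P1 is
achieved with `P_s = P_th`. -/
theorem thm1_station_power_at_max
    (K : ℕ) (hK : 0 < K) (T C B σ2 ζ γc : ℝ)
    (hT : 0 < T) (hC : 0 < C) (hB : 0 < B) (hσ : 0 < σ2) (hζ : 0 < ζ) (hγ : 0 < γc)
    (h g v Pr Pc Rmin Pmax : Fin K → ℝ)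
    (hh : ∀ k, 0 < h k) (hg : ∀ k, 0 < g k) (hv : ∀ k, 0 < v k)
    (hPr : ∀ k, 0 ≤ Pr k) (hPc : ∀ k, 0 ≤ Pc k) (hRmin : ∀ k, 0 < Rmin k)
    (hPmax : ∀ k, 0 < Pmax k)
    (μ ψ P0 Pth : ℝ) (hμ : 0 < μ) (hP0 : 0 ≤ P0) (hPth : 0 < Pth)
    (hthr : ∀ k, P0 < h k * Pth)
    -- non-linear EH model: harvested power of user k at station power Ps
    (PE : Fin K → ℝ → ℝ)
    (hPE : ∀ k Ps, PE k Ps = max 0 ((Pmax k / Real.exp (-μ * P0 + ψ)) *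
      ((1 + Real.exp (-μ * P0 + ψ)) / (1 + Real.exp (-μ * h k * Ps + ψ)) - 1)))
    -- computed bits, consumed energy, feasibility of P1
    (Rate : (Fin K → ℝ) → (Fin K → ℝ) → (Fin K → ℝ) → Fin K → ℝ)
    (hRate : ∀ τ P f k, Rate τ P f k =
      T * f k / C + (B * τ k / v k) * Real.logb 2 (1 + g k * P k / σ2))
    (Energy : ℝ → (Fin K → ℝ) → (Fin K → ℝ) → (Fin K → ℝ) → Fin K → ℝ)
    (hEnergy : ∀ τ0 τ P f k, Energy τ0 τ P f k =
      τ0 * Pr k + ζ * τ k * (P k + Pc k) + T * γc * (f k) ^ 3)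
    (Feas : ℝ → ℝ → (Fin K → ℝ) → (Fin K → ℝ) → (Fin K → ℝ) → Prop)
    (hFeas : ∀ Ps τ0 τ P f, Feas Ps τ0 τ P f ↔
      (0 ≤ Ps ∧ Ps ≤ Pth) ∧ (0 ≤ τ0 ∧ τ0 ≤ T) ∧
      (∀ k, 0 ≤ τ k ∧ τ k ≤ T) ∧ (∀ k, 0 ≤ P k) ∧ (∀ k, 0 ≤ f k) ∧
      τ0 + ∑ k, τ k ≤ T ∧
      (∀ k, Rmin k ≤ Rate τ P f k) ∧
      (∀ k, Energy τ0 τ P f k ≤ τ0 * PE k Ps)) :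
    -- energy reduction while keeping feasibility and the computed bits
    (∀ Ps τ0 τ P f, Feas Ps τ0 τ P f →
      ∃ τ0' : ℝ, 0 ≤ τ0' ∧ τ0' ≤ τ0 ∧ Feas Pth τ0' τ P f ∧
        ∀ k, Energy τ0' τ P f k ≤ Energy τ0 τ P f k) ∧
    -- consequently, the max-min computation efficiency is achieved with Ps = Pth
    sSup {r : ℝ | ∃ Ps τ0 τ P f, Feas Ps τ0 τ P f ∧
        r = ⨅ k : Fin K, Rate τ P f k / Energy τ0 τ P f k} =
    sSup {r : ℝ | ∃ τ0 τ P f, Feas Pth τ0 τ P f ∧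
        r = ⨅ k : Fin K, Rate τ P f k / Energy τ0 τ P f k} := by
  -- monotonicity of the harvested power in the station transmit power
  have mono : ∀ (k : Fin K) (Ps : ℝ), Ps ≤ Pth → PE k Ps ≤ PE k Pth := by
    intro k Ps hle
    rw [hPE, hPE]
    refine max_le_max le_rfl ?_
    have hA : 0 ≤ Pmax k / Real.exp (-μ * P0 + ψ) :=
      div_nonneg (hPmax k).le (Real.exp_pos _).le
    have hexp : Real.exp (-μ * h k * Pth + ψ) ≤ Real.exp (-μ * h k * Ps + ψ) := by
      apply Real.exp_le_exp.2
      have := mul_le_mul_of_nonneg_left hle (mul_pos hμ (hh k)).le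
      nlinarith
    have hd : (0:ℝ) < 1 + Real.exp (-μ * h k * Pth + ψ) := by positivity
    have hBn : (0:ℝ) ≤ 1 + Real.exp (-μ * P0 + ψ) := by positivity
    have hdiv : (1 + Real.exp (-μ * P0 + ψ)) / (1 + Real.exp (-μ * h k * Ps + ψ)) ≤
        (1 + Real.exp (-μ * P0 + ψ)) / (1 + Real.exp (-μ * h k * Pth + ψ)) := by
      gcongr
    nlinarith [hdiv, hA, mul_le_mul_of_nonneg_left hdiv hA]
  -- any feasible point stays feasible after setting the station power to Pth
  have key : ∀ Ps τ0 τ P f, Feas Ps τ0 τ P f → Feas Pth τ0 τ P f := by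
    intro Ps τ0 τ P f hf
    rw [hFeas] at hf ⊢
    obtain ⟨⟨hPs0, hPsle⟩, hτ0, hτ, hP, hfpos, hsum, hR, hE⟩ := hf
    refine ⟨⟨hPth.le, le_rfl⟩, hτ0, hτ, hP, hfpos, hsum, hR, fun k => ?_⟩
    exact (hE k).trans (mul_le_mul_of_nonneg_left (mono k Ps hPsle) hτ0.1)
  constructor
  · intro Ps τ0 τ P f hf
    have hτ0 : 0 ≤ τ0 := (((hFeas Ps τ0 τ P f).1 hf).2.1).1
    exact ⟨τ0, hτ0, le_rfl, key Ps τ0 τ P f hf, fun k => le_rfl⟩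
  · congr 1
    ext r
    constructor
    · rintro ⟨Ps, τ0, τ, P, f, hf, hr⟩
      exact ⟨τ0, τ, P, f, key Ps τ0 τ P f hf, hr⟩
    · rintro ⟨τ0, τ, P, f, hf, hr⟩
      exact ⟨Pth, τ0, τ, P, f, hf, hr⟩
end

section
/- (Lemma 1, generalized Dinkelbach equivalence for max-min fractional programming) Let S be a nonempty set, let K be a nonempty finite index set, and let R_k, E_k : S → ℝ for k ∈ K with E_k(x) > 0 for every k ∈ K and x ∈ S. Let x* ∈ S and set η* := min_{k∈K} R_k(x*)/E_k(x*). Then x* maximizes min_{k∈K} R_k(x)/E_k(x) over S (i.e., min_k R_k(x)/E_k(x) ≤ η* for all x ∈ S) if and only if min_{k∈K} (R_k(x) − η*·E_k(x)) ≤ 0 for all x ∈ S and min_{k∈K} (R_k(x*) − η*·E_k(x*)) = 0; that is, x* achieves the maximum value 0 of the parametric problem max_{x∈S} min_{k∈K} (R_k(x) − η*·E_k(x)). -/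
/-- Lemma 1 (generalized Dinkelbach equivalence for max-min fractional
programming): `x*` maximizes `min_k R_k(x)/E_k(x)` over `S` iff the parametric
problem `max_x min_k (R_k(x) − η*·E_k(x))` with `η* = min_k R_k(x*)/E_k(x*)`
has maximum value `0`, attained at `x*`. -/
theorem dinkelbach_maxmin_equivalence
    (S K : Type*) [Nonempty S] [Fintype K] [Nonempty K]
    (R E : K → S → ℝ) (hE : ∀ k x, 0 < E k x)
    (xstar : S) (ηstar : ℝ)
    (hηstar : ηstar = Finset.univ.inf' Finset.univ_nonempty
      (fun k => R k xstar / E k xstar)) :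
    (∀ x : S, Finset.univ.inf' Finset.univ_nonempty
        (fun k => R k x / E k x) ≤ ηstar) ↔
    ((∀ x : S, Finset.univ.inf' Finset.univ_nonempty
        (fun k => R k x - ηstar * E k x) ≤ 0) ∧
      Finset.univ.inf' Finset.univ_nonempty
        (fun k => R k xstar - ηstar * E k xstar) = 0) := by
  have key : ∀ (x : S) (k : K),
      R k x / E k x ≤ ηstar ↔ R k x - ηstar * E k x ≤ 0 := by
    intro x k
    rw [div_le_iff₀ (hE k x), sub_nonpos, mul_comm]
  constructor
  · intro h
    have h1 : ∀ x : S, Finset.univ.inf' Finset.univ_nonempty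
        (fun k => R k x - ηstar * E k x) ≤ 0 := by
      intro x
      obtain ⟨k, -, hk⟩ := Finset.exists_mem_eq_inf' Finset.univ_nonempty
        (fun k => R k x / E k x)
      have := (key x k).mp (hk ▸ h x)
      exact le_trans (Finset.inf'_le _ (Finset.mem_univ k)) this
    refine ⟨h1, le_antisymm (h1 xstar) ?_⟩
    apply Finset.le_inf'
    intro k _
    have hk : ηstar ≤ R k xstar / E k xstar := by
      rw [hηstar]; exact Finset.inf'_le _ (Finset.mem_univ k)
    have := (le_div_iff₀ (hE k xstar)).mp hk
    linarith
  · rintro ⟨h1, -⟩ x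
    obtain ⟨k, -, hk⟩ := Finset.exists_mem_eq_inf' Finset.univ_nonempty
      (fun k => R k x - ηstar * E k x)
    have hk0 : R k x - ηstar * E k x ≤ 0 := hk ▸ h1 x
    exact le_trans (Finset.inf'_le _ (Finset.mem_univ k)) ((key x k).mpr hk0)
end

section
/- (Lemma 2) Fix K ∈ ℕ, T, B, C, σ², ζ, γ_c > 0, η ≥ 0, and per-user constants g_k > 0, v_k > 0, P_{r,k} ≥ 0, P_{c,k} ≥ 0, R_{k,min} ∈ ℝ, P_{E,k} ≥ 0. Then the feasible region of problem P3, namely the set of tuples (τ_0, (τ_k), (y_k), (f_k), Υ) ∈ ℝ × ℝ^K × ℝ^K × ℝ^K × ℝ satisfying, for all k: 0 ≤ τ_0 ≤ T, 0 < τ_k ≤ T, y_k ≥ 0, f_k ≥ 0, Υ ≥ 0, τ_0 + Σ_k τ_k ≤ T, (i) T·f_k/C + (B·τ_k/v_k)·log₂(1 + g_k·y_k/(τ_k·σ²)) ≥ R_{k,min}, (ii) τ_0·P_{r,k} + ζ·y_k + ζ·τ_k·P_{c,k} + T·γ_c·f_k³ ≤ τ_0·P_{E,k}, and (iii) T·f_k/C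 + (B·τ_k/v_k)·log₂(1 + g_k·y_k/(τ_k·σ²)) − η·(τ_0·P_{r,k} + ζ·y_k + ζ·τ_k·P_{c,k} + T·γ_c·f_k³) ≥ Υ, is a convex subset of ℝ^(3K+2). -/
lemma super_log (c s t u w : ℝ) (hc : 0 ≤ c) (hs : 0 < s) (ht : 0 < t)
    (hu : 0 ≤ u) (hw : 0 ≤ w) :
    s * Real.log (1 + c*u/s) + t * Real.log (1 + c*w/t)
      ≤ (s+t) * Real.log (1 + c*(u+w)/(s+t)) := by
  have hst : 0 < s + t := by linarith
  have hx : (0:ℝ) < 1 + c*u/s := by positivity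
  have hy : (0:ℝ) < 1 + c*w/t := by positivity
  have hsum : s/(s+t) + t/(s+t) = 1 := by field_simp
  have key := strictConcaveOn_log_Ioi.concaveOn.2 (Set.mem_Ioi.mpr hx)
    (Set.mem_Ioi.mpr hy) (by positivity) (by positivity) hsum
  simp only [smul_eq_mul] at key
  have harg : s/(s+t) * (1 + c*u/s) + t/(s+t) * (1 + c*w/t)
      = 1 + c*(u+w)/(s+t) := by field_simp; ring
  rw [harg] at key
  have h2 := mul_le_mul_of_nonneg_left key hst.le
  calc s * Real.log (1 + c*u/s) + t * Real.log (1 + c*w/t)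
      = (s+t) * (s/(s+t) * Real.log (1 + c*u/s) + t/(s+t) * Real.log (1 + c*w/t)) := by
        field_simp
    _ ≤ (s+t) * Real.log (1 + c*(u+w)/(s+t)) := h2

lemma rate_concave (c : ℝ) (hc : 0 ≤ c) {τ1 τ2 y1 y2 a b : ℝ}
    (hτ1 : 0 < τ1) (hτ2 : 0 < τ2) (hy1 : 0 ≤ y1) (hy2 : 0 ≤ y2)
    (ha : 0 ≤ a) (hb : 0 ≤ b) (hab : a + b = 1) :
    a * (τ1 * Real.log (1 + c*y1/τ1)) + b * (τ2 * Real.log (1 + c*y2/τ2))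
      ≤ (a*τ1 + b*τ2) * Real.log (1 + c*(a*y1+b*y2)/(a*τ1+b*τ2)) := by
  rcases ha.eq_or_lt with ha0 | ha0
  · have hb1 : b = 1 := by linarith
    simp [← ha0, hb1]
  rcases hb.eq_or_lt with hb0 | hb0
  · have ha1 : a = 1 := by linarith
    simp [← hb0, ha1]
  have hs : 0 < a * τ1 := by positivity
  have ht : 0 < b * τ2 := by positivity
  have e1 : c*(a*y1)/(a*τ1) = c*y1/τ1 := by
    rw [show c*(a*y1) = a*(c*y1) by ring, mul_div_mul_left _ _ ha0.ne']
  have e2 : c*(b*y2)/(b*τ2) = c*y2/τ2 := by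
    rw [show c*(b*y2) = b*(c*y2) by ring, mul_div_mul_left _ _ hb0.ne']
  have h := super_log c (a*τ1) (b*τ2) (a*y1) (b*y2) hc hs ht
    (by positivity) (by positivity)
  rw [e1, e2] at h
  calc a * (τ1 * Real.log (1 + c*y1/τ1)) + b * (τ2 * Real.log (1 + c*y2/τ2))
      = a*τ1 * Real.log (1 + c*y1/τ1) + b*τ2 * Real.log (1 + c*y2/τ2) := by ring
    _ ≤ _ := h

lemma rate_combo (B vk gk σ2 : ℝ) (hB : 0 < B) (hvk : 0 < vk) (hgk : 0 < gk)
    (hσ : 0 < σ2) {τ1 τ2 y1 y2 a b : ℝ}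
    (hτ1 : 0 < τ1) (hτ2 : 0 < τ2) (hy1 : 0 ≤ y1) (hy2 : 0 ≤ y2)
    (ha : 0 ≤ a) (hb : 0 ≤ b) (hab : a + b = 1) :
    a * ((B*τ1/vk) * Real.logb 2 (1 + gk*y1/(τ1*σ2)))
      + b * ((B*τ2/vk) * Real.logb 2 (1 + gk*y2/(τ2*σ2)))
    ≤ (B*(a*τ1+b*τ2)/vk) *
        Real.logb 2 (1 + gk*(a*y1+b*y2)/((a*τ1+b*τ2)*σ2)) := by
  have hτc : 0 < a*τ1 + b*τ2 := by
    rcases ha.eq_or_lt with ha0 | ha0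
    · have hb1 : b = 1 := by linarith
      rw [← ha0, hb1]; simpa using hτ2
    · nlinarith
  set c := gk/σ2 with hcdef
  have hc : 0 ≤ c := by positivity
  have e : ∀ τ y : ℝ, 0 < τ → gk*y/(τ*σ2) = c*y/τ := by
    intro τ y hτ; rw [hcdef]; ring
  rw [e _ _ hτ1, e _ _ hτ2, e _ _ hτc]
  have h := rate_concave c hc hτ1 hτ2 hy1 hy2 ha hb hab
  have hlog : (0:ℝ) < Real.log 2 := Real.log_pos one_lt_two
  have h2 := mul_le_mul_of_nonneg_left h
    (show (0:ℝ) ≤ B/(vk*Real.log 2) by positivity)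
  simp only [Real.logb]
  calc a * (B*τ1/vk * (Real.log (1 + c*y1/τ1) / Real.log 2))
        + b * (B*τ2/vk * (Real.log (1 + c*y2/τ2) / Real.log 2))
      = B/(vk*Real.log 2) * (a * (τ1 * Real.log (1 + c*y1/τ1))
          + b * (τ2 * Real.log (1 + c*y2/τ2))) := by
        field_simp
    _ ≤ B/(vk*Real.log 2) * ((a*τ1+b*τ2) *
          Real.log (1 + c*(a*y1+b*y2)/(a*τ1+b*τ2))) := h2
    _ = B*(a*τ1+b*τ2)/vk * (Real.log (1 + c*(a*y1+b*y2)/(a*τ1+b*τ2)) / Real.log 2) := by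
        field_simp

lemma cube_convex {x y a b : ℝ} (hx : 0 ≤ x) (hy : 0 ≤ y)
    (ha : 0 ≤ a) (hb : 0 ≤ b) (hab : a + b = 1) :
    (a*x + b*y)^3 ≤ a*x^3 + b*y^3 := by
  have := (convexOn_pow 3).2 (Set.mem_Ici.mpr hx) (Set.mem_Ici.mpr hy) ha hb hab
  simpa using this


open Finset in
/-- Lemma 2: the feasible region of the convex reformulation P3 (TDMA, partial
offloading, energy variables `y_k = τ_k·P_k`, station power fixed at `P_th`,
Dinkelbach parameter `η`, epigraph variable `Υ`) is a convex subset of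
`ℝ × ℝ^K × ℝ^K × ℝ^K × ℝ`. A point is `(τ₀, τ, y, f, Υ)`. -/
theorem P3_feasible_region_convex
    (K : ℕ) (T B C σ2 ζ γc η : ℝ)
    (hT : 0 < T) (hB : 0 < B) (hC : 0 < C) (hσ : 0 < σ2) (hζ : 0 < ζ)
    (hγ : 0 < γc) (hη : 0 ≤ η)
    (g v Pr Pc Rmin PE : Fin K → ℝ)
    (hg : ∀ k, 0 < g k) (hv : ∀ k, 0 < v k) (hPr : ∀ k, 0 ≤ Pr k)
    (hPc : ∀ k, 0 ≤ Pc k) (hPE : ∀ k, 0 ≤ PE k) :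
    Convex ℝ {p : ℝ × (Fin K → ℝ) × (Fin K → ℝ) × (Fin K → ℝ) × ℝ |
      (0 ≤ p.1 ∧ p.1 ≤ T) ∧
      (∀ k, 0 < p.2.1 k ∧ p.2.1 k ≤ T) ∧
      (∀ k, 0 ≤ p.2.2.1 k) ∧
      (∀ k, 0 ≤ p.2.2.2.1 k) ∧
      0 ≤ p.2.2.2.2 ∧
      p.1 + ∑ k, p.2.1 k ≤ T ∧
      (∀ k, Rmin k ≤ T * p.2.2.2.1 k / C + (B * p.2.1 k / v k) *
        Real.logb 2 (1 + g k * p.2.2.1 k / (p.2.1 k * σ2))) ∧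
      (∀ k, p.1 * Pr k + ζ * p.2.2.1 k + ζ * p.2.1 k * Pc k +
        T * γc * (p.2.2.2.1 k) ^ 3 ≤ p.1 * PE k) ∧
      (∀ k, p.2.2.2.2 ≤
        T * p.2.2.2.1 k / C + (B * p.2.1 k / v k) *
          Real.logb 2 (1 + g k * p.2.2.1 k / (p.2.1 k * σ2)) -
        η * (p.1 * Pr k + ζ * p.2.2.1 k + ζ * p.2.1 k * Pc k +
          T * γc * (p.2.2.2.1 k) ^ 3))} := by
  intro p hp q hq a b ha hb hab
  obtain ⟨pτ0, pτ, py, pf, pΥ⟩ := p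
  obtain ⟨qτ0, qτ, qy, qf, qΥ⟩ := q
  simp only [Set.mem_setOf_eq] at hp hq
  obtain ⟨⟨hp0, hpT⟩, hpτ, hpy, hpf, hpΥ, hpsum, hpR, hpE, hpIX⟩ := hp
  obtain ⟨⟨hq0, hqT⟩, hqτ, hqy, hqf, hqΥ, hqsum, hqR, hqE, hqIX⟩ := hq
  simp only [Set.mem_setOf_eq, Prod.smul_mk, Prod.mk_add_mk, smul_eq_mul,
    Pi.add_apply, Pi.smul_apply]
  have hτc : ∀ k, 0 < a * pτ k + b * qτ k := by
    intro k
    rcases ha.eq_or_lt with ha0 | ha0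
    · have hb1 : b = 1 := by linarith
      rw [← ha0, hb1]; simpa using (hqτ k).1
    · nlinarith [(hpτ k).1, (hqτ k).1, mul_pos ha0 (hpτ k).1,
        mul_nonneg hb (hqτ k).1.le]
  have hrate : ∀ k,
      a * ((B * pτ k / v k) * Real.logb 2 (1 + g k * py k / (pτ k * σ2)))
        + b * ((B * qτ k / v k) * Real.logb 2 (1 + g k * qy k / (qτ k * σ2)))
      ≤ (B * (a * pτ k + b * qτ k) / v k) *
          Real.logb 2 (1 + g k * (a * py k + b * qy k) /
            ((a * pτ k + b * qτ k) * σ2)) := fun k =>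
    rate_combo B (v k) (g k) σ2 hB (hv k) (hg k) hσ (hpτ k).1 (hqτ k).1
      (hpy k) (hqy k) ha hb hab
  have hEc : ∀ k,
      (a * pτ0 + b * qτ0) * Pr k + ζ * (a * py k + b * qy k)
        + ζ * (a * pτ k + b * qτ k) * Pc k
        + T * γc * (a * pf k + b * qf k) ^ 3
      ≤ a * (pτ0 * Pr k + ζ * py k + ζ * pτ k * Pc k + T * γc * pf k ^ 3)
        + b * (qτ0 * Pr k + ζ * qy k + ζ * qτ k * Pc k + T * γc * qf k ^ 3) := by
    intro k
    have hc := cube_convex (hpf k) (hqf k) ha hb hab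
    nlinarith [mul_le_mul_of_nonneg_left hc (show (0:ℝ) ≤ T * γc by positivity)]
  refine ⟨⟨add_nonneg (mul_nonneg ha hp0) (mul_nonneg hb hq0), by nlinarith⟩,
    fun k => ⟨hτc k, by nlinarith [(hpτ k).2, (hqτ k).2]⟩,
    fun k => add_nonneg (mul_nonneg ha (hpy k)) (mul_nonneg hb (hqy k)),
    fun k => add_nonneg (mul_nonneg ha (hpf k)) (mul_nonneg hb (hqf k)),
    add_nonneg (mul_nonneg ha hpΥ) (mul_nonneg hb hqΥ), ?_, ?_, ?_, ?_⟩
  · rw [Finset.sum_add_distrib, ← Finset.mul_sum, ← Finset.mul_sum]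
    nlinarith
  · intro k
    have h1 := mul_le_mul_of_nonneg_left (hpR k) ha
    have h2 := mul_le_mul_of_nonneg_left (hqR k) hb
    have h0 : a * Rmin k + b * Rmin k = Rmin k := by
      rw [← add_mul, hab, one_mul]
    have ef : a * (T * pf k / C) + b * (T * qf k / C)
        = T * (a * pf k + b * qf k) / C := by ring
    linarith [hrate k]
  · intro k
    have h1 := mul_le_mul_of_nonneg_left (hpE k) ha
    have h2 := mul_le_mul_of_nonneg_left (hqE k) hb
    linarith [hEc k]
  · intro k
    have h1 := mul_le_mul_of_nonneg_left (hpIX k) ha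
    have h2 := mul_le_mul_of_nonneg_left (hqIX k) hb
    have h3 := mul_le_mul_of_nonneg_left (hEc k) hη
    have ef : a * (T * pf k / C) + b * (T * qf k / C)
        = T * (a * pf k + b * qf k) / C := by ring
    linarith [hrate k]
end

section
/- (Theorem 2, offloading power) Let B, v, ζ, g, σ² > 0, and let λ ≥ 0, ρ ≥ 0, θ ≥ 0, η ≥ 0 satisfy λ + θ > 0 and ρ + θ·η > 0. Then the concave function y ↦ ((λ + θ)·B/v)·log₂(1 + g·y/σ²) − ζ·(ρ + θ·η)·y on [0, ∞) attains its maximum at the unique point y* = max{0, (λ + θ)·B/(ζ·v·(ln 2)·(ρ + θ·η)) − σ²/g}, and y* is the unique maximizer on [0, ∞). -/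
lemma thm2_key (A c σ2 g : ℝ) (hA : 0 < A) (hc : 0 < c) (hσ : 0 < σ2) (hg : 0 < g)
    (y0 : ℝ) (hy0 : y0 = max 0 (A / c - σ2 / g)) :
    ∀ y, 0 ≤ y → y ≠ y0 →
      A * Real.log (1 + g * y / σ2) - c * y <
        A * Real.log (1 + g * y0 / σ2) - c * y0 := by
  intro y hy hne
  have hy0nn : 0 ≤ y0 := hy0 ▸ le_max_left _ _
  have hd : 0 < σ2 + g * y := by positivity
  have hd0 : 0 < σ2 + g * y0 := by positivity
  have hrw : ∀ z : ℝ, 0 ≤ z → Real.log (1 + g * z / σ2) =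
      Real.log (σ2 + g * z) - Real.log σ2 := by
    intro z hz
    have : 1 + g * z / σ2 = (σ2 + g * z) / σ2 := by field_simp
    rw [this, Real.log_div (by positivity) hσ.ne']
  rw [hrw y hy, hrw y0 hy0nn]
  set t : ℝ := (σ2 + g * y) / (σ2 + g * y0) with ht
  have htpos : 0 < t := by positivity
  have hlogt : Real.log (σ2 + g * y) - Real.log (σ2 + g * y0) = Real.log t := by
    rw [ht, Real.log_div hd.ne' hd0.ne']
  have htne : t ≠ 1 := by
    intro h
    apply hne
    have := (div_eq_one_iff_eq hd0.ne').mp h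
    have : g * y = g * y0 := by linarith
    exact mul_left_cancel₀ hg.ne' this
  have hlt : Real.log t < t - 1 := Real.log_lt_sub_one_of_pos htpos htne
  have hgoal : A * Real.log t < c * (y - y0) := by
    rcases le_or_gt (A / c - σ2 / g) 0 with hcase | hcase
    · -- y0 = 0
      have hy00 : y0 = 0 := by rw [hy0, max_eq_left hcase]
      have hypos : 0 < y := lt_of_le_of_ne hy (fun h => hne (h ▸ hy00.symm))
      have ht1 : t - 1 = g * y / σ2 := by
        rw [ht, hy00]; field_simp; ring
      have hAg : A * g ≤ c * σ2 := by
        have : A / c ≤ σ2 / g := by linarith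
        rw [div_le_div_iff₀ hc hg] at this; linarith
      have h3 : A * (t - 1) ≤ c * y := by
        rw [ht1]
        rw [mul_div_assoc'] at *
        rw [div_le_iff₀ hσ]
        calc A * (g * y) = (A * g) * y := by ring
          _ ≤ (c * σ2) * y := by nlinarith
          _ = c * y * σ2 := by ring
      calc A * Real.log t < A * (t - 1) := by nlinarith
        _ ≤ c * y := h3
        _ = c * (y - y0) := by rw [hy00]; ring
    · -- interior case
      have hy0' : y0 = A / c - σ2 / g := by rw [hy0, max_eq_right hcase.le]
      have hden : σ2 + g * y0 = g * A / c := by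
        rw [hy0']; field_simp; ring
      have hy0eq : c * g * y0 = g * A - c * σ2 := by
        rw [hy0']; field_simp
      have ht1 : A * (t - 1) = c * (y - y0) := by
        rw [ht, hden]
        field_simp
        linear_combination hy0eq
      calc A * Real.log t < A * (t - 1) := by nlinarith
        _ = c * (y - y0) := ht1
  rw [← hlogt] at hgoal
  nlinarith [hgoal]

/-- Theorem 2 (offloading power): the concave function
`y ↦ ((λ+θ)·B/v)·log₂(1 + g·y/σ²) − ζ·(ρ+θ·η)·y` attains its maximum on
`[0, ∞)` at the unique point
`y* = max{0, (λ+θ)·B/(ζ·v·ln 2·(ρ+θ·η)) − σ²/g}`. -/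
theorem thm2_optimal_offloading_power
    (B v ζ g σ2 lam ρ θ η : ℝ)
    (hB : 0 < B) (hv : 0 < v) (hζ : 0 < ζ) (hg : 0 < g) (hσ : 0 < σ2)
    (hlam : 0 ≤ lam) (hρ : 0 ≤ ρ) (hθ : 0 ≤ θ) (hη : 0 ≤ η)
    (h1 : 0 < lam + θ) (h2 : 0 < ρ + θ * η) :
    let φ : ℝ → ℝ := fun y =>
      ((lam + θ) * B / v) * Real.logb 2 (1 + g * y / σ2) - ζ * (ρ + θ * η) * y
    let ystar : ℝ :=
      max 0 ((lam + θ) * B / (ζ * v * Real.log 2 * (ρ + θ * η)) - σ2 / g)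
    ystar ∈ Set.Ici (0:ℝ) ∧ IsMaxOn φ (Set.Ici 0) ystar ∧
      ∀ x ∈ Set.Ici (0:ℝ), IsMaxOn φ (Set.Ici 0) x → x = ystar := by
  intro φ ystar
  have hlog2 : 0 < Real.log 2 := Real.log_pos (by norm_num)
  set A : ℝ := (lam + θ) * B / (v * Real.log 2) with hAdef
  set c : ℝ := ζ * (ρ + θ * η) with hcdef
  have hA : 0 < A := by positivity
  have hc : 0 < c := by positivity
  have hφ : ∀ y, φ y = A * Real.log (1 + g * y / σ2) - c * y := by
    intro y
    simp only [φ, Real.logb, hAdef, hcdef]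
    field_simp
  have hys : ystar = max 0 (A / c - σ2 / g) := by
    simp only [ystar, hAdef, hcdef]
    congr 2
    field_simp
  have key := thm2_key A c σ2 g hA hc hσ hg ystar hys
  have hysnn : (0:ℝ) ≤ ystar := hys ▸ le_max_left _ _
  refine ⟨hysnn, ?_, ?_⟩
  · intro y hy
    simp only [Set.mem_Ici] at hy
    simp only [Set.mem_setOf_eq, hφ]
    rcases eq_or_ne y ystar with h | h
    · rw [h]
    · exact (key y hy h).le
  · intro x hx hmax
    by_contra hne
    have h1' := key x hx hne
    have h2' := hmax hysnn
    simp only [Set.mem_setOf_eq, hφ] at h1' h2' ⊢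
    linarith
end

section
/- (Theorem 3, existence and uniqueness of the channel-gain threshold ω) Let λ, θ, B, v, ζ, η, σ² > 0, β ≥ 0, P_c ≥ 0 with ζ·θ·η·P_c + β > 0. Define w₀ := ζ·v·θ·η·σ²·(ln 2)/((λ + θ)·B) and, for w > 0, Γ(w) := (B·(λ + θ)/v)·log₂((λ + θ)·B·w/(ζ·v·θ·η·σ²·(ln 2))) − (λ + θ)·B/(v·ln 2) + ζ·θ·η·σ²/w − ζ·θ·η·P_c − β. Then Γ(w₀) = −ζ·θ·η·P_c − β < 0, Γ is strictly increasing on [w₀, ∞), Γ(w) → +∞ as w → +∞, and there exists a unique w* ∈ (w₀, ∞) with Γ(w*) = 0. -/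
/-- Theorem 3 (existence and uniqueness of the channel-gain threshold `ω`):
with `w₀ = ζ·v·θ·η·σ²·ln 2/((λ+θ)·B)`, the function `Γ` of equation (15)
satisfies `Γ(w₀) = −ζ·θ·η·P_c − β < 0`, is strictly increasing on `[w₀, ∞)`,
tends to `+∞` at `+∞`, and has a unique root `w* ∈ (w₀, ∞)`. -/
theorem thm3_threshold_exists_unique
    (lam θ B v ζ η σ2 β Pc : ℝ)
    (hlam : 0 < lam) (hθ : 0 < θ) (hB : 0 < B) (hv : 0 < v) (hζ : 0 < ζ)
    (hη : 0 < η) (hσ : 0 < σ2) (hβ : 0 ≤ β) (hPc : 0 ≤ Pc)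
    (hpos : 0 < ζ * θ * η * Pc + β) :
    let w0 : ℝ := ζ * v * θ * η * σ2 * Real.log 2 / ((lam + θ) * B)
    let Γ : ℝ → ℝ := fun w =>
      (B * (lam + θ) / v) *
        Real.logb 2 ((lam + θ) * B * w / (ζ * v * θ * η * σ2 * Real.log 2)) -
      (lam + θ) * B / (v * Real.log 2) + ζ * θ * η * σ2 / w - ζ * θ * η * Pc - β
    Γ w0 = -(ζ * θ * η * Pc) - β ∧
    Γ w0 < 0 ∧
    StrictMonoOn Γ (Set.Ici w0) ∧
    Filter.Tendsto Γ Filter.atTop Filter.atTop ∧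
    ∃! w : ℝ, w ∈ Set.Ioi w0 ∧ Γ w = 0 := by
  intro w0 Γ
  have hL : (0:ℝ) < Real.log 2 := Real.log_pos one_lt_two
  have hA : (0:ℝ) < (lam + θ) * B := by positivity
  have hc : (0:ℝ) < ζ * v * θ * η * σ2 * Real.log 2 := by positivity
  have hw0def : w0 = ζ * v * θ * η * σ2 * Real.log 2 / ((lam + θ) * B) := rfl
  have hΓdef : ∀ w : ℝ, Γ w =
      (B * (lam + θ) / v) *
        Real.logb 2 ((lam + θ) * B * w / (ζ * v * θ * η * σ2 * Real.log 2)) -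
      (lam + θ) * B / (v * Real.log 2) + ζ * θ * η * σ2 / w - ζ * θ * η * Pc - β :=
    fun _ => rfl
  have hw0 : 0 < w0 := by rw [hw0def]; positivity
  have hd : (0:ℝ) < ζ * θ * η * σ2 := by positivity
  set C : ℝ := B * (lam + θ) / (v * Real.log 2) with hCdef
  have hC : 0 < C := by rw [hCdef]; positivity
  set φ : ℝ → ℝ := fun w =>
      C * Real.log w
        + C * Real.log ((lam + θ) * B / (ζ * v * θ * η * σ2 * Real.log 2))
        - (lam + θ) * B / (v * Real.log 2)
        + ζ * θ * η * σ2 * w⁻¹ - ζ * θ * η * Pc - β with hφdef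
  have hAc : (0:ℝ) < (lam + θ) * B / (ζ * v * θ * η * σ2 * Real.log 2) := div_pos hA hc
  -- Γ agrees with φ on positive reals
  have hEq : ∀ w : ℝ, 0 < w → Γ w = φ w := by
    intro w hw
    have harg : (lam + θ) * B * w / (ζ * v * θ * η * σ2 * Real.log 2)
        = ((lam + θ) * B / (ζ * v * θ * η * σ2 * Real.log 2)) * w := by ring
    rw [hΓdef, harg, Real.logb, Real.log_mul hAc.ne' hw.ne', hφdef, hCdef]
    have hv' : v ≠ 0 := hv.ne'
    have hL' : Real.log 2 ≠ 0 := hL.ne'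
    have hw' : w ≠ 0 := hw.ne'
    field_simp
    ring
  -- value at w0
  have hΓw0 : Γ w0 = -(ζ * θ * η * Pc) - β := by
    have harg : (lam + θ) * B * w0 / (ζ * v * θ * η * σ2 * Real.log 2) = 1 := by
      rw [hw0def]; field_simp
    have hdw0 : ζ * θ * η * σ2 / w0 = (lam + θ) * B / (v * Real.log 2) := by
      rw [hw0def]; field_simp
    rw [hΓdef, harg, Real.logb, Real.log_one, hdw0]
    ring
  have hΓw0neg : Γ w0 < 0 := by rw [hΓw0]; linarith
  -- C * w0 = d
  have hCw0 : C * w0 = ζ * θ * η * σ2 := by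
    rw [hCdef, hw0def]; field_simp
  -- derivative of φ
  have hder : ∀ x : ℝ, 0 < x →
      HasDerivAt φ (C * x⁻¹ + ζ * θ * η * σ2 * (-(x ^ 2)⁻¹)) x := by
    intro x hx
    have h1 : HasDerivAt (fun w : ℝ => C * Real.log w) (C * x⁻¹) x :=
      (Real.hasDerivAt_log hx.ne').const_mul C
    have h2 : HasDerivAt (fun w : ℝ => ζ * θ * η * σ2 * w⁻¹)
        (ζ * θ * η * σ2 * (-(x ^ 2)⁻¹)) x :=
      (hasDerivAt_inv hx.ne').const_mul (ζ * θ * η * σ2)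
    have := ((((h1.add_const
        (C * Real.log ((lam + θ) * B / (ζ * v * θ * η * σ2 * Real.log 2)))).sub_const
        ((lam + θ) * B / (v * Real.log 2))).add h2).sub_const (ζ * θ * η * Pc)).sub_const β
    simpa [hφdef] using this
  -- continuity of φ on Ici w0
  have hcontφ : ContinuousOn φ (Set.Ici w0) := by
    have hlog : ContinuousOn (fun w : ℝ => Real.log w) (Set.Ici w0) :=
      Real.continuousOn_log.mono (fun x hx => by
        simp only [Set.mem_compl_iff, Set.mem_singleton_iff]
        exact (lt_of_lt_of_le hw0 hx).ne')
    have hinv : ContinuousOn (fun w : ℝ => w⁻¹) (Set.Ici w0) :=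
      continuousOn_inv₀.mono (fun x hx => by
        simp only [Set.mem_compl_iff, Set.mem_singleton_iff]
        exact (lt_of_lt_of_le hw0 hx).ne')
    exact (((((continuousOn_const.mul hlog).add continuousOn_const).sub
      continuousOn_const).add (continuousOn_const.mul hinv)).sub
      continuousOn_const).sub continuousOn_const
  -- strict monotonicity of φ on Ici w0
  have hφmono : StrictMonoOn φ (Set.Ici w0) := by
    apply strictMonoOn_of_deriv_pos (convex_Ici w0) hcontφ
    intro x hx
    rw [interior_Ici] at hx
    have hxpos : 0 < x := lt_trans hw0 hx
    rw [(hder x hxpos).deriv]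
    have hform : C * x⁻¹ + ζ * θ * η * σ2 * (-(x ^ 2)⁻¹)
        = (C * x - ζ * θ * η * σ2) / x ^ 2 := by
      field_simp; ring
    rw [hform]
    apply div_pos _ (by positivity)
    have : C * w0 < C * x := mul_lt_mul_of_pos_left hx hC
    linarith [hCw0]
  have hΓmono : StrictMonoOn Γ (Set.Ici w0) := by
    intro a ha b hb hab
    rw [hEq a (lt_of_lt_of_le hw0 ha), hEq b (lt_of_lt_of_le hw0 hb)]
    exact hφmono ha hb hab
  -- tendsto atTop
  have hbase : Filter.Tendsto (fun w : ℝ =>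
      C * Real.log w
        + (C * Real.log ((lam + θ) * B / (ζ * v * θ * η * σ2 * Real.log 2))
          - (lam + θ) * B / (v * Real.log 2) - ζ * θ * η * Pc - β))
      Filter.atTop Filter.atTop :=
    Filter.tendsto_atTop_add_const_right _ _
      (Real.tendsto_log_atTop.const_mul_atTop hC)
  have htop : Filter.Tendsto Γ Filter.atTop Filter.atTop := by
    apply Filter.tendsto_atTop_mono' _ _ hbase
    filter_upwards [Filter.eventually_gt_atTop (0:ℝ)] with w hw
    rw [hEq w hw, hφdef]
    have : 0 ≤ ζ * θ * η * σ2 * w⁻¹ := by positivity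
    simp only []
    linarith
  refine ⟨hΓw0, hΓw0neg, hΓmono, htop, ?_⟩
  -- existence
  obtain ⟨b, hb⟩ := ((htop.eventually_gt_atTop 0).and
    (Filter.eventually_gt_atTop w0)).exists
  obtain ⟨hΓb, hw0b⟩ := hb
  have hcontΓ : ContinuousOn Γ (Set.Icc w0 b) := by
    apply (hcontφ.mono Set.Icc_subset_Ici_self).congr
    intro x hx
    exact hEq x (lt_of_lt_of_le hw0 hx.1)
  have h0mem : (0:ℝ) ∈ Set.Ioo (Γ w0) (Γ b) := ⟨hΓw0neg, hΓb⟩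
  obtain ⟨w, hwmem, hwroot⟩ := intermediate_value_Ioo (le_of_lt hw0b) hcontΓ h0mem
  refine ⟨w, ⟨hwmem.1, hwroot⟩, ?_⟩
  rintro y ⟨hy, hyroot⟩
  exact hΓmono.injOn (Set.mem_Ici.mpr (le_of_lt hy)) (Set.mem_Ici.mpr (le_of_lt hwmem.1)) (by rw [hyroot, hwroot])
end

section
/- (Lemma 3) Consider problem P4 (binary offloading, TDMA) with user set K partitioned into a local-computing set M₀ and an offloading set M₁, and suppose h_k · P_th > P_0 for every user k. Let (P_s, τ_0, (τ_n)_{n∈M₁}, (P_n)_{n∈M₁}, (f_m)_{m∈M₀}) be any feasible point, i.e.: 0 ≤ P_s ≤ P_th; 0 ≤ τ_0 ≤ T; 0 ≤ τ_n ≤ T, Σ_{n∈M₁} τ_n ≤ T, P_n ≥ 0 for n ∈ M₁; f_m ≥ 0 for m ∈ M₀; T·f_m/C ≥ R_{m,min} for m ∈ M₀; (B·τ_n/v_n)·log₂(1 + g_n·P_n/σ²) ≥ R_{n,min} for n ∈ M₁; τ_0·P_{r,m} + T·γ_c·f_m³ ≤ τ_0·P_{E,m}(P_s) for m ∈ M₀;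 and τ_0·P_{r,n} + ζ·τ_n·(P_n + P_{c,n}) ≤ τ_0·P_{E,n}(P_s) for n ∈ M₁. Then there exists τ_0′ with 0 ≤ τ_0′ ≤ τ_0 such that the point with P_s replaced by P_th and τ_0 replaced by τ_0′ (all other variables unchanged) is also feasible, every user's computed bits are unchanged, and every user's consumed energy (τ_0′·P_{r,m} + T·γ_c·f_m³ for m ∈ M₀, and τ_0′·P_{r,n} + ζ·τ_n·(P_n + P_{c,n}) for n ∈ M₁) is no larger than before. Consequently the maximum of the max-min computation efficiency over the feasible set of P4 is achieved with P_s = P_th. -/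
open Finset in
/-- Lemma 3: in the TDMA wireless-powered MEC network under the binary
computation offloading mode (users partitioned into a local-computing set `M₀`
and an offloading set `M₁`), any feasible point of P4 can be modified, by
setting the station power to `P_th` and suitably shrinking the
energy-harvesting time, into another feasible point with unchanged computed
bits and no larger consumed energy for every user; consequently the max-min
computation efficiency over the feasible set of P4 is achieved with
`P_s = P_th`. -/
theorem lemma3_station_power_at_max_binary
    (K : ℕ) (hK : 0 < K) (T C B σ2 ζ γc : ℝ)
    (hT : 0 < T) (hC : 0 < C) (hB : 0 < B) (hσ : 0 < σ2) (hζ : 0 < ζ) (hγ : 0 < γc)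
    (h g v Pr Pc Rmin Pmax : Fin K → ℝ)
    (hh : ∀ k, 0 < h k) (hg : ∀ k, 0 < g k) (hv : ∀ k, 0 < v k)
    (hPr : ∀ k, 0 ≤ Pr k) (hPc : ∀ k, 0 ≤ Pc k) (hRmin : ∀ k, 0 < Rmin k)
    (hPmax : ∀ k, 0 < Pmax k)
    (μ ψ P0 Pth : ℝ) (hμ : 0 < μ) (hP0 : 0 ≤ P0) (hPth : 0 < Pth)
    (hthr : ∀ k, P0 < h k * Pth)
    -- non-linear EH model: harvested power of user k at station power Ps
    (PE : Fin K → ℝ → ℝ)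
    (hPE : ∀ k Ps, PE k Ps = max 0 ((Pmax k / Real.exp (-μ * P0 + ψ)) *
      ((1 + Real.exp (-μ * P0 + ψ)) / (1 + Real.exp (-μ * h k * Ps + ψ)) - 1)))
    -- the partition of the user set into local computing (M0) and offloading (M1)
    (M0 M1 : Finset (Fin K))
    (hpart : M0 ∪ M1 = Finset.univ) (hdisj : Disjoint M0 M1)
    -- per-user consumed energy and computation efficiency
    (Energy : ℝ → (Fin K → ℝ) → (Fin K → ℝ) → (Fin K → ℝ) → Fin K → ℝ)
    (hEnergy : ∀ τ0 τ P f k, Energy τ0 τ P f k =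
      if k ∈ M0 then τ0 * Pr k + T * γc * (f k) ^ 3
      else τ0 * Pr k + ζ * τ k * (P k + Pc k))
    (CE : ℝ → (Fin K → ℝ) → (Fin K → ℝ) → (Fin K → ℝ) → Fin K → ℝ)
    (hCE : ∀ τ0 τ P f k, CE τ0 τ P f k =
      (if k ∈ M0 then T * f k / C
       else (B * τ k / v k) * Real.logb 2 (1 + g k * P k / σ2)) /
      Energy τ0 τ P f k)
    -- feasibility for P4
    (Feas : ℝ → ℝ → (Fin K → ℝ) → (Fin K → ℝ) → (Fin K → ℝ) → Prop)
    (hFeas : ∀ Ps τ0 τ P f, Feas Ps τ0 τ P f ↔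
      (0 ≤ Ps ∧ Ps ≤ Pth) ∧ (0 ≤ τ0 ∧ τ0 ≤ T) ∧
      (∀ n ∈ M1, 0 ≤ τ n ∧ τ n ≤ T) ∧ (∑ n ∈ M1, τ n) ≤ T ∧
      (∀ n ∈ M1, 0 ≤ P n) ∧ (∀ m ∈ M0, 0 ≤ f m) ∧
      (∀ m ∈ M0, Rmin m ≤ T * f m / C) ∧
      (∀ n ∈ M1, Rmin n ≤ (B * τ n / v n) * Real.logb 2 (1 + g n * P n / σ2)) ∧
      (∀ m ∈ M0, τ0 * Pr m + T * γc * (f m) ^ 3 ≤ τ0 * PE m Ps) ∧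
      (∀ n ∈ M1, τ0 * Pr n + ζ * τ n * (P n + Pc n) ≤ τ0 * PE n Ps)) :
    -- energy reduction while keeping feasibility and the computed bits
    (∀ Ps τ0 τ P f, Feas Ps τ0 τ P f →
      ∃ τ0' : ℝ, 0 ≤ τ0' ∧ τ0' ≤ τ0 ∧ Feas Pth τ0' τ P f ∧
        ∀ k, Energy τ0' τ P f k ≤ Energy τ0 τ P f k) ∧
    -- consequently, the max-min computation efficiency is achieved with Ps = Pth
    sSup {r : ℝ | ∃ Ps τ0 τ P f, Feas Ps τ0 τ P f ∧
        r = ⨅ k : Fin K, CE τ0 τ P f k} =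
    sSup {r : ℝ | ∃ τ0 τ P f, Feas Pth τ0 τ P f ∧
        r = ⨅ k : Fin K, CE τ0 τ P f k} := by

  have hmono : ∀ k Ps, Ps ≤ Pth → PE k Ps ≤ PE k Pth := by
    intro k Ps hle
    rw [hPE, hPE]
    have hd : (0:ℝ) < 1 + Real.exp (-μ * h k * Pth + ψ) := by positivity
    apply max_le_max le_rfl
    apply mul_le_mul_of_nonneg_left _ (le_of_lt (div_pos (hPmax k) (Real.exp_pos _)))
    apply sub_le_sub_right
    apply div_le_div_of_nonneg_left (by positivity) hd
    have hexp : Real.exp (-μ * h k * Pth + ψ) ≤ Real.exp (-μ * h k * Ps + ψ) := by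
      apply Real.exp_le_exp.2
      have hmul : μ * h k * Ps ≤ μ * h k * Pth :=
        mul_le_mul_of_nonneg_left hle (le_of_lt (mul_pos hμ (hh k)))
      linarith
    linarith
  have hstep : ∀ Ps τ0 τ P f, Feas Ps τ0 τ P f → Feas Pth τ0 τ P f := by
    intro Ps τ0 τ P f hfeas
    rw [hFeas] at hfeas ⊢
    obtain ⟨⟨hPs0, hPsle⟩, h2, h3, h4, h5, h6, h7, h8, h9, h10⟩ := hfeas
    refine ⟨⟨hPth.le, le_rfl⟩, h2, h3, h4, h5, h6, h7, h8, ?_, ?_⟩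
    · intro m hm
      exact (h9 m hm).trans (mul_le_mul_of_nonneg_left (hmono m Ps hPsle) h2.1)
    · intro n hn
      exact (h10 n hn).trans (mul_le_mul_of_nonneg_left (hmono n Ps hPsle) h2.1)
  constructor
  · intro Ps τ0 τ P f hfeas
    exact ⟨τ0, ((hFeas _ _ _ _ _).1 hfeas).2.1.1, le_rfl, hstep _ _ _ _ _ hfeas,
      fun k => le_rfl⟩
  · congr 1
    ext r
    simp only [Set.mem_setOf_eq]
    constructor
    · rintro ⟨Ps, τ0, τ, P, f, hf, hr⟩
      exact ⟨τ0, τ, P, f, hstep _ _ _ _ _ hf, hr⟩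
    · rintro ⟨τ0, τ, P, f, hf, hr⟩
      exact ⟨Pth, τ0, τ, P, f, hf, hr⟩
end

section
/- (Lemma 4) Consider problem P7 (partial offloading, NOMA) with K users and suppose h_k · P_th > P_0 for every k. Let (P_s, τ_0, τ_1, (P_k), (f_k)) be any feasible point, i.e.: 0 ≤ P_s ≤ P_th; 0 ≤ τ_0 ≤ T; 0 ≤ τ_1 ≤ T; τ_0 + τ_1 ≤ T; P_k ≥ 0 and f_k ≥ 0 for all k; R_k ≥ R_{k,min} for all k, where R_k := T·f_k/C + (B·τ_1/v_k)·log₂(1 + g_k·P_k/(Σ_{i=k+1}^K g_i·P_i + σ²)) for 1 ≤ k ≤ K−1 and R_K := T·f_K/C + (B·τ_1/v_K)·log₂(1 + g_K·P_K/σ²); and E_k := τ_0·P_{r,k} + ζ·τ_1·(P_k + P_{c,k}) + T·γ_c·f_k³ ≤ τ_0·P_{E,k}(P_s) for all k. Then there exists τ_0′ with 0 ≤ τ_0′ ≤ τ_0 such that (P_th, τ_0′, τ_1, (P_k), (f_k)) is also feasible, the computed bits R_k are unchanged, and every user's consumed energy E_k′ := τ_0′·P_{r,k} + ζ·τ_1·(P_k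 + P_{c,k}) + T·γ_c·f_k³ satisfies E_k′ ≤ E_k. Consequently the maximum of the max-min computation efficiency min_k R_k/E_k over the feasible set of P7 is achieved with P_s = P_th. -/
open Finset in
/-- Lemma 4: in the NOMA wireless-powered MEC network under partial offloading
(common offloading duration `τ₁`, channel gains ordered `g₁ < ⋯ < g_K`, SIC
decoding in descending channel order so that user `k` sees interference
`Σ_{i>k} g_i·P_i`), any feasible point of P7 can be modified, by setting the
station power to `P_th` and suitably shrinking the energy-harvesting time, into
another feasible point with unchanged computed bits and no larger consumed
energy for every user; consequently the max-min computation efficiency over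
the feasible set of P7 is achieved with `P_s = P_th`. -/
theorem lemma4_station_power_at_max_noma
    (K : ℕ) (hK : 0 < K) (T C B σ2 ζ γc : ℝ)
    (hT : 0 < T) (hC : 0 < C) (hB : 0 < B) (hσ : 0 < σ2) (hζ : 0 < ζ) (hγ : 0 < γc)
    (h g v Pr Pc Rmin Pmax : Fin K → ℝ)
    (hh : ∀ k, 0 < h k) (hg : ∀ k, 0 < g k) (hord : StrictMono g)
    (hv : ∀ k, 0 < v k)
    (hPr : ∀ k, 0 ≤ Pr k) (hPc : ∀ k, 0 ≤ Pc k) (hRmin : ∀ k, 0 < Rmin k)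
    (hPmax : ∀ k, 0 < Pmax k)
    (μ ψ P0 Pth : ℝ) (hμ : 0 < μ) (hP0 : 0 ≤ P0) (hPth : 0 < Pth)
    (hthr : ∀ k, P0 < h k * Pth)
    -- non-linear EH model: harvested power of user k at station power Ps
    (PE : Fin K → ℝ → ℝ)
    (hPE : ∀ k Ps, PE k Ps = max 0 ((Pmax k / Real.exp (-μ * P0 + ψ)) *
      ((1 + Real.exp (-μ * P0 + ψ)) / (1 + Real.exp (-μ * h k * Ps + ψ)) - 1)))
    -- computed bits (with SIC: user k sees interference from users i > k, so
    -- the strongest user k = K experiences no interference), consumed energy,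
    -- feasibility for P7
    (Rate : ℝ → (Fin K → ℝ) → (Fin K → ℝ) → Fin K → ℝ)
    (hRate : ∀ τ1 P f k, Rate τ1 P f k =
      T * f k / C + (B * τ1 / v k) * Real.logb 2
        (1 + g k * P k / ((∑ i ∈ Finset.univ.filter (fun i => k < i), g i * P i) + σ2)))
    (Energy : ℝ → ℝ → (Fin K → ℝ) → (Fin K → ℝ) → Fin K → ℝ)
    (hEnergy : ∀ τ0 τ1 P f k, Energy τ0 τ1 P f k =
      τ0 * Pr k + ζ * τ1 * (P k + Pc k) + T * γc * (f k) ^ 3)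
    (Feas : ℝ → ℝ → ℝ → (Fin K → ℝ) → (Fin K → ℝ) → Prop)
    (hFeas : ∀ Ps τ0 τ1 P f, Feas Ps τ0 τ1 P f ↔
      (0 ≤ Ps ∧ Ps ≤ Pth) ∧ (0 ≤ τ0 ∧ τ0 ≤ T) ∧ (0 ≤ τ1 ∧ τ1 ≤ T) ∧
      τ0 + τ1 ≤ T ∧ (∀ k, 0 ≤ P k) ∧ (∀ k, 0 ≤ f k) ∧
      (∀ k, Rmin k ≤ Rate τ1 P f k) ∧
      (∀ k, Energy τ0 τ1 P f k ≤ τ0 * PE k Ps)) :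
    -- energy reduction while keeping feasibility and the computed bits
    (∀ Ps τ0 τ1 P f, Feas Ps τ0 τ1 P f →
      ∃ τ0' : ℝ, 0 ≤ τ0' ∧ τ0' ≤ τ0 ∧ Feas Pth τ0' τ1 P f ∧
        ∀ k, Energy τ0' τ1 P f k ≤ Energy τ0 τ1 P f k) ∧
    -- consequently, the max-min computation efficiency is achieved with Ps = Pth
    sSup {r : ℝ | ∃ Ps τ0 τ1 P f, Feas Ps τ0 τ1 P f ∧
        r = ⨅ k : Fin K, Rate τ1 P f k / Energy τ0 τ1 P f k} =
    sSup {r : ℝ | ∃ τ0 τ1 P f, Feas Pth τ0 τ1 P f ∧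
        r = ⨅ k : Fin K, Rate τ1 P f k / Energy τ0 τ1 P f k} := by
  -- PE is monotone in Ps
  have hPEmono : ∀ (k : Fin K) (Ps : ℝ), Ps ≤ Pth → PE k Ps ≤ PE k Pth := by
    intro k Ps hle
    rw [hPE, hPE]
    apply max_le_max le_rfl
    have hc : 0 ≤ Pmax k / Real.exp (-μ * P0 + ψ) :=
      div_nonneg (hPmax k).le (Real.exp_pos _).le
    apply mul_le_mul_of_nonneg_left _ hc
    have hA : (0:ℝ) < 1 + Real.exp (-μ * P0 + ψ) := by positivity
    have he : Real.exp (-μ * h k * Pth + ψ) ≤ Real.exp (-μ * h k * Ps + ψ) := by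
      apply Real.exp_le_exp.mpr
      have := (hh k)
      nlinarith [mul_le_mul_of_nonneg_left hle (mul_nonneg hμ.le (hh k).le)]
    have h2 : (0:ℝ) < 1 + Real.exp (-μ * h k * Pth + ψ) := by positivity
    have he' : 1 + Real.exp (-μ * h k * Pth + ψ) ≤ 1 + Real.exp (-μ * h k * Ps + ψ) := by
      linarith
    have := div_le_div_of_nonneg_left hA.le h2 he'
    linarith
  have key : ∀ Ps τ0 τ1 P f, Feas Ps τ0 τ1 P f → Feas Pth τ0 τ1 P f := by
    intro Ps τ0 τ1 P f hfeas
    rw [hFeas] at hfeas ⊢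
    obtain ⟨⟨hPs0, hPsle⟩, hτ0, hτ1, hsum, hP, hf, hR, hE⟩ := hfeas
    refine ⟨⟨hPth.le, le_rfl⟩, hτ0, hτ1, hsum, hP, hf, hR, fun k => ?_⟩
    exact (hE k).trans (mul_le_mul_of_nonneg_left (hPEmono k Ps hPsle) hτ0.1)
  constructor
  · intro Ps τ0 τ1 P f hfeas
    exact ⟨τ0, ((hFeas _ _ _ _ _).mp hfeas).2.1.1, le_rfl, key _ _ _ _ _ hfeas,
      fun k => le_rfl⟩
  · congr 1
    ext r
    constructor
    · rintro ⟨Ps, τ0, τ1, P, f, hfeas, hr⟩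
      exact ⟨τ0, τ1, P, f, key _ _ _ _ _ hfeas, hr⟩
    · rintro ⟨τ0, τ1, P, f, hfeas, hr⟩
      exact ⟨Pth, τ0, τ1, P, f, hfeas, hr⟩
end
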